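/- Let P_1, P_2 be CPTs from finite set X to finite set Y and π_1, π_2 probability mass functions on X with induced marginals ρ_1, ρ_2 on Y. Then d_V(ρ_1, ρ_2) ≤ (1 + d_V(π_1, π_2)) · d_V⁺(P_1, P_2) + d_V(π_1, π_2) · max{d⁺(P_1), d⁺(P_2)}. -/

import Mathlib

noncomputable def dV {Z : Type*} [Fintype Z] (p q : Z → ℝ) : ℝ :=
  (1/2) * ∑ z, |p z - q z|

def IsPMF {Z : Type*} [Fintype Z] (p : Z → ℝ) : Prop :=
  (∀ z, 0 ≤ p z) ∧ ∑ z, p z = 1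

noncomputable def diam {X Y : Type*} [Fintype X] [Fintype Y]
    (P : X → Y → ℝ) : ℝ :=
  ⨆ x : X, ⨆ x' : X, dV (P x) (P x')

noncomputable def dVplus {X Y : Type*} [Fintype X] [Fintype Y]
    (P Q : X → Y → ℝ) : ℝ :=
  ⨆ x : X, dV (P x) (Q x)

lemma dV_nonneg {Z : Type*} [Fintype Z] (p q : Z → ℝ) : 0 ≤ dV p q := by
  unfold dV
  have : (0:ℝ) ≤ ∑ z, |p z - q z| := Finset.sum_nonneg fun z _ => abs_nonneg _
  linarith

lemma dV_le_diam {X Y : Type*} [Fintype X] [Fintype Y] (P : X → Y → ℝ) (x x' : X) :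
    dV (P x) (P x') ≤ diam P := by
  have h1 : dV (P x) (P x') ≤ ⨆ x'' : X, dV (P x) (P x'') :=
    le_ciSup (f := fun x'' => dV (P x) (P x'')) (Set.finite_range _).bddAbove x'
  exact h1.trans (le_ciSup (f := fun x => ⨆ x' : X, dV (P x) (P x')) (Set.finite_range _).bddAbove x)

lemma dV_le_dVplus {X Y : Type*} [Fintype X] [Fintype Y] (P Q : X → Y → ℝ) (x : X) :
    dV (P x) (Q x) ≤ dVplus P Q :=
  le_ciSup (f := fun x => dV (P x) (Q x)) (Set.finite_range _).bddAbove x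

lemma dVplus_nonneg {X Y : Type*} [Fintype X] [Fintype Y] [Nonempty X]
    (P Q : X → Y → ℝ) : 0 ≤ dVplus P Q := by
  obtain ⟨x⟩ := (inferInstance : Nonempty X)
  exact (dV_nonneg (P x) (Q x)).trans (dV_le_dVplus P Q x)

/-- The key mixing lemma: if `μ` sums to zero, then the total variation of the mixture
`∑ x, μ x * P x` is at most `(½ ∑ |μ|) * diam P`. -/
lemma key_mix {X Y : Type*} [Fintype X] [Fintype Y] (P : X → Y → ℝ) (μ : X → ℝ)
    (hμ : ∑ x, μ x = 0) :
    (1/2) * ∑ y, |∑ x, μ x * P x y| ≤ ((1/2) * ∑ x, |μ x|) * diam P := by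
  classical
  set a : X → ℝ := fun x => max (μ x) 0 with ha_def
  set b : X → ℝ := fun x => max (-(μ x)) 0 with hb_def
  have ha_nonneg : ∀ x, 0 ≤ a x := fun x => le_max_right _ _
  have hb_nonneg : ∀ x, 0 ≤ b x := fun x => le_max_right _ _
  have hab : ∀ x, a x - b x = μ x := by
    intro x
    rcases le_total 0 (μ x) with h | h
    · simp [ha_def, hb_def, max_eq_left h, max_eq_right (neg_nonpos.mpr h)]
    · simp [ha_def, hb_def, max_eq_right h, max_eq_left (neg_nonneg.mpr h)]
  have habs : ∀ x, a x + b x = |μ x| := by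
    intro x
    rcases le_total 0 (μ x) with h | h
    · simp [ha_def, hb_def, max_eq_left h, max_eq_right (neg_nonpos.mpr h), abs_of_nonneg h]
    · simp [ha_def, hb_def, max_eq_right h, max_eq_left (neg_nonneg.mpr h), abs_of_nonpos h]
  set t : ℝ := ∑ x, a x with ht_def
  have ht_nonneg : 0 ≤ t := Finset.sum_nonneg fun x _ => ha_nonneg x
  have hb_sum : ∑ x, b x = t := by
    have h1 : ∑ x, (a x - b x) = 0 := by
      rw [show (fun x => a x - b x) = μ from funext hab] at *
      exact hμ
    rw [Finset.sum_sub_distrib] at h1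
    linarith
  have habs_sum : ∑ x, |μ x| = 2 * t := by
    have : ∑ x, (a x + b x) = ∑ x, |μ x| := Finset.sum_congr rfl fun x _ => habs x
    rw [Finset.sum_add_distrib, hb_sum] at this
    linarith
  rcases eq_or_lt_of_le ht_nonneg with ht0 | htpos
  · -- t = 0 : μ = 0
    have ha0 : ∀ x, a x = 0 := by
      intro x
      have := (Finset.sum_eq_zero_iff_of_nonneg (fun x _ => ha_nonneg x)).mp ht0.symm
      exact this x (Finset.mem_univ x)
    have hμ0 : ∀ x, μ x = 0 := by
      intro x
      have h2 : |μ x| = a x + b x := (habs x).symm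
      have h3 : |μ x| ≤ ∑ x, |μ x| :=
        Finset.single_le_sum (fun x _ => abs_nonneg (μ x)) (Finset.mem_univ x)
      rw [habs_sum, ← ht0] at h3
      have := abs_nonneg (μ x)
      have : |μ x| = 0 := le_antisymm (by linarith) (abs_nonneg _)
      exact abs_eq_zero.mp this
    have hz : ∀ y, (∑ x, μ x * P x y) = 0 :=
      fun y => Finset.sum_eq_zero fun x _ => by rw [hμ0 x, zero_mul]
    simp only [habs_sum, ← ht0]
    simp [hz]
  · -- t > 0
    have expand : ∀ y, ∑ x, ∑ x', a x * b x' * (P x y - P x' y) = t * ∑ x, μ x * P x y := by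
      intro y
      have h1 : ∑ x, ∑ x', a x * b x' * (P x y - P x' y)
          = (∑ x, a x * P x y) * (∑ x', b x') - (∑ x, a x) * (∑ x', b x' * P x' y) := by
        rw [Finset.sum_mul_sum, Finset.sum_mul_sum, ← Finset.sum_sub_distrib]
        refine Finset.sum_congr rfl fun x _ => ?_
        rw [← Finset.sum_sub_distrib]
        exact Finset.sum_congr rfl fun x' _ => by ring
      rw [h1, hb_sum, ← ht_def]
      have h2 : (∑ x, a x * P x y) - (∑ x, b x * P x y) = ∑ x, μ x * P x y := by
        rw [← Finset.sum_sub_distrib]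
        exact Finset.sum_congr rfl fun x _ => by rw [← hab x]; ring
      calc (∑ x, a x * P x y) * t - t * ∑ x', b x' * P x' y
          = t * ((∑ x, a x * P x y) - (∑ x, b x * P x y)) := by ring
        _ = t * ∑ x, μ x * P x y := by rw [h2]
    have step1 : (1/2) * ∑ y, |∑ x, μ x * P x y|
        ≤ (1/t) * ∑ x, ∑ x', a x * b x' * dV (P x) (P x') := by
      have hpt : ∀ y, |∑ x, μ x * P x y|
          = (1/t) * |∑ x, ∑ x', a x * b x' * (P x y - P x' y)| := by
        intro y
        rw [expand, abs_mul, abs_of_pos htpos]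
        field_simp
      calc (1/2) * ∑ y, |∑ x, μ x * P x y|
          = (1/t) * ((1/2) * ∑ y, |∑ x, ∑ x', a x * b x' * (P x y - P x' y)|) := by
            rw [Finset.mul_sum, Finset.mul_sum, Finset.mul_sum]
            refine Finset.sum_congr rfl fun y _ => ?_
            rw [hpt y]; ring
        _ ≤ (1/t) * ((1/2) * ∑ y, ∑ x, ∑ x', a x * b x' * |P x y - P x' y|) := by
            have hinner : ∀ y, |∑ x, ∑ x', a x * b x' * (P x y - P x' y)|
                ≤ ∑ x, ∑ x', a x * b x' * |P x y - P x' y| := by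
              intro y
              refine (Finset.abs_sum_le_sum_abs _ _).trans ?_
              refine Finset.sum_le_sum fun x _ => ?_
              refine (Finset.abs_sum_le_sum_abs _ _).trans ?_
              refine Finset.sum_le_sum fun x' _ => ?_
              rw [abs_mul, abs_mul, abs_of_nonneg (ha_nonneg x), abs_of_nonneg (hb_nonneg x')]
            have hsum : ∑ y, |∑ x, ∑ x', a x * b x' * (P x y - P x' y)|
                ≤ ∑ y, ∑ x, ∑ x', a x * b x' * |P x y - P x' y| :=
              Finset.sum_le_sum fun y _ => hinner y
            have h1t : (0:ℝ) ≤ 1/t := by positivity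
            nlinarith [hsum]
        _ = (1/t) * ∑ x, ∑ x', a x * b x' * dV (P x) (P x') := by
            congr 1
            have hre : ∑ y, ∑ x, ∑ x', a x * b x' * |P x y - P x' y|
                = ∑ x, ∑ x', a x * b x' * ∑ y, |P x y - P x' y| := by
              rw [Finset.sum_comm]
              refine Finset.sum_congr rfl fun x _ => ?_
              rw [Finset.sum_comm]
              refine Finset.sum_congr rfl fun x' _ => ?_
              rw [Finset.mul_sum]
            rw [hre, Finset.mul_sum]
            refine Finset.sum_congr rfl fun x _ => ?_
            rw [Finset.mul_sum]
            refine Finset.sum_congr rfl fun x' _ => ?_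
            unfold dV
            ring
    have step2 : ∑ x, ∑ x', a x * b x' * dV (P x) (P x') ≤ t * t * diam P := by
      have h1 : ∑ x, ∑ x', a x * b x' * dV (P x) (P x')
          ≤ ∑ x, ∑ x', a x * b x' * diam P := by
        refine Finset.sum_le_sum fun x _ => Finset.sum_le_sum fun x' _ => ?_
        exact mul_le_mul_of_nonneg_left (dV_le_diam P x x')
          (mul_nonneg (ha_nonneg x) (hb_nonneg x'))
      refine h1.trans ?_
      have h2 : ∑ x, ∑ x', a x * b x' * diam P = t * t * diam P := by
        have : ∑ x, ∑ x', a x * b x' * diam P = (∑ x, a x) * (∑ x', b x') * diam P := by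
          rw [Finset.sum_mul_sum, Finset.sum_mul]
          refine Finset.sum_congr rfl fun x _ => ?_
          rw [Finset.sum_mul]
        rw [this, hb_sum]
      exact le_of_eq h2
    calc (1/2) * ∑ y, |∑ x, μ x * P x y|
        ≤ (1/t) * ∑ x, ∑ x', a x * b x' * dV (P x) (P x') := step1
      _ ≤ (1/t) * (t * t * diam P) := by
          exact mul_le_mul_of_nonneg_left step2 (by positivity)
      _ = ((1/2) * ∑ x, |μ x|) * diam P := by
          rw [habs_sum]
          field_simp

theorem stmt16 {X Y : Type*} [Fintype X] [Fintype Y] [Nonempty X]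
    (P1 P2 : X → Y → ℝ) (hP1 : ∀ x, IsPMF (P1 x)) (hP2 : ∀ x, IsPMF (P2 x))
    (π1 π2 : X → ℝ) (hπ1 : IsPMF π1) (hπ2 : IsPMF π2) :
    dV (fun y => ∑ x, π1 x * P1 x y) (fun y => ∑ x, π2 x * P2 x y) ≤
      (1 + dV π1 π2) * dVplus P1 P2 + dV π1 π2 * max (diam P1) (diam P2) := by
  classical
  set t := dV π1 π2 with ht_def
  set D := dVplus P1 P2 with hD_def
  have ht_nonneg : 0 ≤ t := dV_nonneg π1 π2
  have hD_nonneg : 0 ≤ D := dVplus_nonneg P1 P2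
  -- main bound : dV ρ1 ρ2 ≤ D + t * diam P2
  have hsplit : ∀ y, |(∑ x, π1 x * P1 x y) - (∑ x, π2 x * P2 x y)|
      ≤ |∑ x, π1 x * (P1 x y - P2 x y)| + |∑ x, (π1 x - π2 x) * P2 x y| := by
    intro y
    have heq : (∑ x, π1 x * P1 x y) - (∑ x, π2 x * P2 x y)
        = (∑ x, π1 x * (P1 x y - P2 x y)) + (∑ x, (π1 x - π2 x) * P2 x y) := by
      rw [← Finset.sum_add_distrib, ← Finset.sum_sub_distrib]
      exact Finset.sum_congr rfl fun x _ => by ring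
    rw [heq]
    exact abs_add_le _ _
  have hdv : dV (fun y => ∑ x, π1 x * P1 x y) (fun y => ∑ x, π2 x * P2 x y)
      ≤ (1/2) * ∑ y, |∑ x, π1 x * (P1 x y - P2 x y)|
        + (1/2) * ∑ y, |∑ x, (π1 x - π2 x) * P2 x y| := by
    unfold dV
    have h1 : ∑ y, |(∑ x, π1 x * P1 x y) - (∑ x, π2 x * P2 x y)|
        ≤ ∑ y, (|∑ x, π1 x * (P1 x y - P2 x y)| + |∑ x, (π1 x - π2 x) * P2 x y|) :=
      Finset.sum_le_sum fun y _ => hsplit y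
    rw [Finset.sum_add_distrib] at h1
    linarith
  -- term 1
  have hterm1 : (1/2) * ∑ y, |∑ x, π1 x * (P1 x y - P2 x y)| ≤ D := by
    have h1 : ∀ y, |∑ x, π1 x * (P1 x y - P2 x y)| ≤ ∑ x, π1 x * |P1 x y - P2 x y| := by
      intro y
      refine (Finset.abs_sum_le_sum_abs _ _).trans ?_
      refine Finset.sum_le_sum fun x _ => ?_
      rw [abs_mul, abs_of_nonneg (hπ1.1 x)]
    have h2 : (1/2) * ∑ y, |∑ x, π1 x * (P1 x y - P2 x y)|
        ≤ (1/2) * ∑ y, ∑ x, π1 x * |P1 x y - P2 x y| := by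
      have := Finset.sum_le_sum fun y (_ : y ∈ Finset.univ) => h1 y
      linarith
    refine h2.trans ?_
    have h3 : (1/2) * ∑ y, ∑ x, π1 x * |P1 x y - P2 x y|
        = ∑ x, π1 x * dV (P1 x) (P2 x) := by
      rw [Finset.sum_comm, Finset.mul_sum]
      refine Finset.sum_congr rfl fun x _ => ?_
      unfold dV
      rw [← Finset.mul_sum]
      ring
    rw [h3]
    calc ∑ x, π1 x * dV (P1 x) (P2 x) ≤ ∑ x, π1 x * D := by
          refine Finset.sum_le_sum fun x _ => ?_
          exact mul_le_mul_of_nonneg_left (dV_le_dVplus P1 P2 x) (hπ1.1 x)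
      _ = D := by rw [← Finset.sum_mul, hπ1.2, one_mul]
  -- term 2
  have hterm2 : (1/2) * ∑ y, |∑ x, (π1 x - π2 x) * P2 x y| ≤ t * diam P2 := by
    have hμ : ∑ x, (π1 x - π2 x) = 0 := by
      rw [Finset.sum_sub_distrib, hπ1.2, hπ2.2]; ring
    have := key_mix P2 (fun x => π1 x - π2 x) hμ
    have ht_eq : (1/2) * ∑ x, |π1 x - π2 x| = t := by rw [ht_def]; rfl
    rw [ht_eq] at this
    exact this
  have hdiam2 : diam P2 ≤ max (diam P1) (diam P2) := le_max_right _ _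
  have hterm2' : (1/2) * ∑ y, |∑ x, (π1 x - π2 x) * P2 x y|
      ≤ t * max (diam P1) (diam P2) := by
    refine hterm2.trans ?_
    exact mul_le_mul_of_nonneg_left hdiam2 ht_nonneg
  have := hdv.trans (add_le_add hterm1 hterm2')
  nlinarith [mul_nonneg ht_nonneg hD_nonneg]
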